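/- In the Khalimsky plane, if p is a pure point, then for every open pure point q and every closed pure point r, the COTS-distances satisfy d(p,q) ≠ d(p,r); equivalently, points at the same COTS-distance from a pure point cannot consist of one open and one closed point. -/

import Mathlib

open Set

/-- The minimal open neighborhood of a point in a topological space. -/
def minOpenNhd {X : Type*} (t : TopologicalSpace X) (x : X) : Set X :=
  ⋂₀ {U : Set X | t.IsOpen U ∧ x ∈ U}

/-- The specialization-style preorder: `x ≤ y` iff `U_x ⊆ U_y`. -/
def specLE {X : Type*} (t : TopologicalSpace X) (x y : X) : Prop :=
  minOpenNhd t x ⊆ minOpenNhd t y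

/-- Two points are adjacent if distinct and comparable in the specialization order. -/
def Adjacent {X : Type*} (t : TopologicalSpace X) (x y : X) : Prop :=
  x ≠ y ∧ (specLE t x y ∨ specLE t y x)

/-- The adjacency set of a point. -/
def adjSet {X : Type*} (t : TopologicalSpace X) (x : X) : Set X := {y | Adjacent t x y}

/-- A COTS: a connected space in which every 3-point subset has a point separating
the other two. -/
def IsCOTS {X : Type*} (t : TopologicalSpace X) : Prop :=
  @ConnectedSpace X t ∧
    ∀ Y : Set X, Y.ncard = 3 →
      ∃ y ∈ Y, ∃ a ∈ Y \ {y}, ∃ b ∈ Y \ {y},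
        @connectedComponentIn X t {y}ᶜ a ≠ @connectedComponentIn X t {y}ᶜ b

/-- An endpoint of a COTS: a point with at most one neighbor. -/
def IsEndpoint {X : Type*} (t : TopologicalSpace X) (x : X) : Prop :=
  (adjSet t x).ncard ≤ 1

/-- A COTS-path: the continuous image of a finite COTS. -/
def IsCOTSPath {Y : Type*} (tY : TopologicalSpace Y) (P : Set Y) : Prop :=
  ∃ (C : Type) (tC : TopologicalSpace C), Finite C ∧ IsCOTS tC ∧
    ∃ f : C → Y, @Continuous C Y tC tY f ∧ Set.range f = P

/-- A COTS-path with prescribed start and end points. -/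
def IsCOTSPathFromTo {Y : Type*} (tY : TopologicalSpace Y) (P : Set Y) (a b : Y) : Prop :=
  ∃ (C : Type) (tC : TopologicalSpace C), Finite C ∧ IsCOTS tC ∧
    ∃ f : C → Y, @Continuous C Y tC tY f ∧ Set.range f = P ∧
      ∃ c₀ c₁ : C, IsEndpoint tC c₀ ∧ IsEndpoint tC c₁ ∧ f c₀ = a ∧ f c₁ = b

/-- A COTS-arc: the homeomorphic image of a finite COTS. -/
def IsCOTSArc {Y : Type*} (tY : TopologicalSpace Y) (A : Set Y) : Prop :=
  ∃ (C : Type) (tC : TopologicalSpace C), Finite C ∧ IsCOTS tC ∧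
    ∃ f : C → Y, @Topology.IsEmbedding C Y tC tY f ∧ Set.range f = A

/-- A COTS-arc with prescribed endpoints. -/
def IsCOTSArcFromTo {Y : Type*} (tY : TopologicalSpace Y) (A : Set Y) (a b : Y) : Prop :=
  ∃ (C : Type) (tC : TopologicalSpace C), Finite C ∧ IsCOTS tC ∧
    ∃ f : C → Y, @Topology.IsEmbedding C Y tC tY f ∧ Set.range f = A ∧
      ∃ c₀ c₁ : C, IsEndpoint tC c₀ ∧ IsEndpoint tC c₁ ∧ f c₀ = a ∧ f c₁ = b

/-- The COTS-distance: one less than the minimal cardinality of a COTS-arc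
joining two points (`⊤` if there is no such arc). -/
noncomputable def cotsDist {X : Type*} (t : TopologicalSpace X) (x y : X) : ℕ∞ :=
  sInf {n : ℕ∞ | ∃ A : Set X, IsCOTSArcFromTo t A x y ∧ (A.ncard : ℕ∞) = n + 1}

/-- The Khalimsky topology on ℤ. -/
def khal : TopologicalSpace ℤ :=
  TopologicalSpace.generateFrom
    {s : Set ℤ | ∃ n : ℤ, (Odd n ∧ s = {n}) ∨ (Even n ∧ s = {n - 1, n, n + 1})}

/-- The Khalimsky plane topology on ℤ × ℤ. -/
def khalPlane : TopologicalSpace (ℤ × ℤ) := @instTopologicalSpaceProd ℤ ℤ khal khal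

/-- A point of the Khalimsky plane is pure if its coordinates have the same parity. -/
def IsPurePt (p : ℤ × ℤ) : Prop := (Even p.1 ∧ Even p.2) ∨ (Odd p.1 ∧ Odd p.2)

/-- A digital Jordan curve: a finite set of at least 4 points such that removing
any point leaves a COTS-arc. -/
def IsJordanCurve {X : Type*} (t : TopologicalSpace X) (J : Set X) : Prop :=
  J.Finite ∧ 4 ≤ J.ncard ∧ ∀ j ∈ J, IsCOTSArc t (J \ {j})

/-- The interior of a digital Jordan curve in the Khalimsky plane: the union of the
finite (bounded) connected components of its complement. -/
def jInterior (J : Set (ℤ × ℤ)) : Set (ℤ × ℤ) :=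
  ⋃₀ {S | ∃ p ∉ J, S = @connectedComponentIn _ khalPlane Jᶜ p ∧ S.Finite}

/-- the minimal neighborhood in the Khalimsky line -/
def Nz (n : ℤ) : Set ℤ := if Even n then {n - 1, n, n + 1} else {n}

lemma self_mem_Nz (n : ℤ) : n ∈ Nz n := by
  unfold Nz; split <;> simp

lemma mem_Nz {y n : ℤ} : y ∈ Nz n ↔ (y = n ∨ (Even n ∧ (y - n).natAbs ≤ 1)) := by
  unfold Nz; split <;> rename_i h <;> simp [Set.mem_insert_iff]
  · constructor
    · rintro (h1 | h1 | h1)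
      · exact Or.inr ⟨h, by omega⟩
      · exact Or.inl h1
      · exact Or.inr ⟨h, by omega⟩
    · rintro (rfl | ⟨-, h1⟩)
      · tauto
      · omega
  · intro h1; exact absurd h1 h

lemma Nz_abs_le {y n : ℤ} (h : y ∈ Nz n) : (y - n).natAbs ≤ 1 := by
  rcases mem_Nz.1 h with rfl | ⟨-, h⟩ <;> omega

lemma isOpen_Nz (n : ℤ) : khal.IsOpen (Nz n) := by
  apply TopologicalSpace.GenerateOpen.basic
  by_cases h : Even n
  · exact ⟨n, Or.inr ⟨h, by simp [Nz, h]⟩⟩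
  · exact ⟨n, Or.inl ⟨Int.not_even_iff_odd.1 h, by simp [Nz, h]⟩⟩

lemma Nz_subset_of_open {U : Set ℤ} (hU : khal.IsOpen U) : ∀ n ∈ U, Nz n ⊆ U := by
  induction hU with
  | basic s hs =>
    obtain ⟨m, (⟨hm, rfl⟩ | ⟨hm, rfl⟩)⟩ := hs
    · rintro n rfl
      simp only [Nz, if_neg (by exact fun h => (Int.not_odd_iff_even.mpr h) hm)]; exact subset_rfl
    · intro n hn
      rcases hn with rfl | rfl | rfl
      · have : ¬ Even (m - 1) := by rcases hm with ⟨k, hk⟩; simp [Int.even_iff]; omega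
        simp only [Nz, if_neg this]; simp
      · simp only [Nz, if_pos hm]; exact subset_rfl
      · have : ¬ Even (m + 1) := by rcases hm with ⟨k, hk⟩; simp [Int.even_iff]; omega
        simp only [Nz, if_neg this]; intro z hz; rcases hz with rfl; simp
  | univ => intro n _; exact subset_univ _
  | inter s t _ _ ihs iht => intro n hn; exact subset_inter (ihs n hn.1) (iht n hn.2)
  | sUnion S _ ih =>
    rintro n ⟨s, hs, hns⟩
    exact (ih s hs n hns).trans (subset_sUnion_of_mem hs)

lemma minOpenNhd_khal (n : ℤ) : minOpenNhd khal n = Nz n := by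
  apply subset_antisymm
  · exact sInter_subset_of_mem ⟨isOpen_Nz n, self_mem_Nz n⟩
  · intro y hy
    rintro U ⟨hU, hnU⟩
    exact Nz_subset_of_open hU n hnU hy

lemma isOpen_Nz2 (z : ℤ × ℤ) : khalPlane.IsOpen (Nz z.1 ×ˢ Nz z.2) :=
  @IsOpen.prod ℤ ℤ khal khal _ _ (isOpen_Nz z.1) (isOpen_Nz z.2)

lemma minOpenNhd_khalPlane (z : ℤ × ℤ) : minOpenNhd khalPlane z = Nz z.1 ×ˢ Nz z.2 := by
  apply subset_antisymm
  · exact sInter_subset_of_mem ⟨isOpen_Nz2 z, ⟨self_mem_Nz z.1, self_mem_Nz z.2⟩⟩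
  · rintro y hy U ⟨hU, hzU⟩
    obtain ⟨u, v, hu, hv, hz1, hz2, huv⟩ :=
      (@isOpen_prod_iff ℤ ℤ khal khal U).1 hU z.1 z.2 hzU
    apply huv
    exact ⟨Nz_subset_of_open hu z.1 hz1 hy.1, Nz_subset_of_open hv z.2 hz2 hy.2⟩

/-! ### general Alexandrov-style lemmas -/

lemma minOpenNhd_mem_opens {X : Type*} (t : TopologicalSpace X) {x : X} {U : Set X}
    (hU : t.IsOpen U) (hx : x ∈ U) : minOpenNhd t x ⊆ U :=
  sInter_subset_of_mem ⟨hU, hx⟩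

lemma minOpenNhd_induced {X Y : Type*} (tY : TopologicalSpace Y) (f : X → Y) (x : X)
    (hopen : tY.IsOpen (minOpenNhd tY (f x))) :
    minOpenNhd (tY.induced f) x = f ⁻¹' (minOpenNhd tY (f x)) := by
  apply subset_antisymm
  · apply sInter_subset_of_mem
    refine ⟨⟨_, hopen, rfl⟩, ?_⟩
    exact mem_preimage.2 (mem_sInter.2 fun U hU => hU.2)
  · rintro y hy U ⟨hU, hxU⟩
    obtain ⟨V, hV, rfl⟩ := hU
    exact minOpenNhd_mem_opens tY hV hxU hy

lemma isOpen_minOpenNhd_of_finite {X : Type*} [Finite X] (t : TopologicalSpace X) (x : X) :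
    t.IsOpen (minOpenNhd t x) := by
  apply Set.Finite.isOpen_sInter (Set.toFinite _)
  exact fun U hU => hU.1

lemma mem_minOpenNhd_self {X : Type*} (t : TopologicalSpace X) (x : X) :
    x ∈ minOpenNhd t x := mem_sInter.2 fun U hU => hU.2

lemma topology_eq_of_minOpenNhd {X : Type*} [Finite X] (t₁ t₂ : TopologicalSpace X)
    (h : ∀ x, minOpenNhd t₁ x = minOpenNhd t₂ x) : t₁ = t₂ := by
  have key : ∀ (t₁ t₂ : TopologicalSpace X), (∀ x, minOpenNhd t₁ x = minOpenNhd t₂ x) →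
      ∀ U, t₁.IsOpen U → t₂.IsOpen U := by
    intro t₁ t₂ h U hU
    have : U = ⋃ x ∈ U, minOpenNhd t₂ x := by
      apply subset_antisymm
      · intro x hx
        exact mem_biUnion hx (mem_minOpenNhd_self t₂ x)
      · intro y hy
        simp only [mem_iUnion] at hy
        obtain ⟨x, hx, hyx⟩ := hy
        have := (h x) ▸ hyx
        exact minOpenNhd_mem_opens t₁ hU hx this
    rw [this]
    exact isOpen_biUnion fun x _ => isOpen_minOpenNhd_of_finite t₂ x
  apply TopologicalSpace.ext
  ext U
  exact ⟨key t₁ t₂ h U, key t₂ t₁ (fun x => (h x).symm) U⟩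

/-- two comparable points form a preconnected set -/
lemma pair_preconnected {X : Type*} (t : TopologicalSpace X) {x y : X}
    (h : y ∈ minOpenNhd t x) : @IsPreconnected X t {x, y} := by
  intro U V hU hV hUV hne1 hne2
  have hxy : x ∈ U → y ∈ U := fun hx => minOpenNhd_mem_opens t hU hx h
  have hxy' : x ∈ V → y ∈ V := fun hx => minOpenNhd_mem_opens t hV hx h
  have hx : x ∈ U ∪ V := hUV (by simp)
  rcases hx with hx | hx
  · obtain ⟨z, hz1, hz2⟩ := hne2
    rcases hz1 with rfl | rfl
    · exact ⟨z, by simp, hx, hz2⟩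
    · exact ⟨z, by simp, hxy hx, hz2⟩
  · obtain ⟨z, hz1, hz2⟩ := hne1
    rcases hz1 with rfl | rfl
    · exact ⟨z, by simp, hz2, hx⟩
    · exact ⟨z, by simp, hz2, hxy' hx⟩

lemma khal_pair_preconnected (n : ℤ) : @IsPreconnected ℤ khal {n, n + 1} := by
  by_cases h : Even n
  · apply pair_preconnected khal
    rw [minOpenNhd_khal]
    simp [Nz, if_pos h]
  · rw [Set.pair_comm]
    apply pair_preconnected khal
    rw [minOpenNhd_khal]
    have : Even (n + 1) := by rcases Int.not_even_iff_odd.1 h with ⟨k, hk⟩; exact ⟨k+1, by omega⟩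
    simp [Nz, if_pos this, Int.not_even_iff_odd.1 h]

lemma khal_Icc_preconnected_nat (a : ℤ) (n : ℕ) :
    @IsPreconnected ℤ khal (Set.Icc a (a + n)) := by
  induction n with
  | zero => simpa using @isPreconnected_singleton ℤ khal a
  | succ n ih =>
    have heq : Set.Icc a (a + (n + 1 : ℕ)) = Set.Icc a (a + n) ∪ {a + n, a + n + 1} := by
      ext z; simp only [Set.mem_Icc, Set.mem_union, Set.mem_insert_iff, Set.mem_singleton_iff]
      push_cast; omega
    rw [heq]
    exact @IsPreconnected.union ℤ khal (a + n) _ _ (by simp) (by simp) ih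
      (khal_pair_preconnected (a + n))

lemma khal_Icc_preconnected (a b : ℤ) : @IsPreconnected ℤ khal (Set.Icc a b) := by
  rcases le_or_gt a b with hab | hab
  · obtain ⟨n, hn⟩ : ∃ n : ℕ, b = a + n := ⟨(b - a).toNat, by omega⟩
    rw [hn]; exact khal_Icc_preconnected_nat a n
  · rw [Set.Icc_eq_empty (by omega)]; exact @isPreconnected_empty ℤ khal

/-! ### Chebyshev distance and the lower bound -/

def cheb (u v : ℤ × ℤ) : ℕ := max (u.1 - v.1).natAbs (u.2 - v.2).natAbs

lemma cheb_self (u : ℤ × ℤ) : cheb u u = 0 := by simp [cheb]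

lemma cheb_triangle (u v w : ℤ × ℤ) : cheb u w ≤ cheb u v + cheb v w := by
  unfold cheb
  apply max_le
  · calc (u.1 - w.1).natAbs ≤ (u.1 - v.1).natAbs + (v.1 - w.1).natAbs := by omega
      _ ≤ _ := add_le_add (le_max_left _ _) (le_max_left _ _)
  · calc (u.2 - w.2).natAbs ≤ (u.2 - v.2).natAbs + (v.2 - w.2).natAbs := by omega
      _ ≤ _ := add_le_add (le_max_right _ _) (le_max_right _ _)

lemma cheb_minOpenNhd {z w : ℤ × ℤ} (h : w ∈ minOpenNhd khalPlane z) : cheb z w ≤ 1 := by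
  rw [minOpenNhd_khalPlane] at h
  have h1 := Nz_abs_le h.1
  have h2 := Nz_abs_le h.2
  unfold cheb
  omega

lemma lower_bound {S : Set (ℤ × ℤ)} (hfin : S.Finite)
    (hconn : @IsPreconnected (ℤ × ℤ) khalPlane S) {p x : ℤ × ℤ}
    (hp : p ∈ S) (hx : x ∈ S) : cheb p x + 1 ≤ S.ncard := by
  have key : ∀ k ≤ cheb p x, ∃ z ∈ S, cheb p z = k := by
    intro k hk
    by_contra hno
    push_neg at hno
    have hk0 : k ≠ 0 := fun h => hno p hp (by rw [h, cheb_self])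
    have hkc : k ≠ cheb p x := fun h => hno x hx h.symm
    set U : Set (ℤ × ℤ) := ⋃ z ∈ {z ∈ S | cheb p z < k}, minOpenNhd khalPlane z with hU
    set V : Set (ℤ × ℤ) := ⋃ z ∈ {z ∈ S | k < cheb p z}, minOpenNhd khalPlane z with hV
    have hUopen : khalPlane.IsOpen U := by
      apply @isOpen_biUnion (ℤ × ℤ) _ khalPlane _ _
      intro z _; rw [minOpenNhd_khalPlane]; exact isOpen_Nz2 z
    have hVopen : khalPlane.IsOpen V := by
      apply @isOpen_biUnion (ℤ × ℤ) _ khalPlane _ _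
      intro z _; rw [minOpenNhd_khalPlane]; exact isOpen_Nz2 z
    have hSUV : S ⊆ U ∪ V := by
      intro z hz
      have : cheb p z ≠ k := fun h => hno z hz h
      rcases lt_or_gt_of_ne this with h | h
      · exact Or.inl (mem_biUnion (by exact ⟨hz, h⟩) (mem_minOpenNhd_self _ z))
      · exact Or.inr (mem_biUnion (by exact ⟨hz, h⟩) (mem_minOpenNhd_self _ z))
    have hne1 : (S ∩ U).Nonempty :=
      ⟨p, hp, mem_biUnion (by exact ⟨hp, by rw [cheb_self]; omega⟩) (mem_minOpenNhd_self _ p)⟩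
    have hne2 : (S ∩ V).Nonempty :=
      ⟨x, hx, mem_biUnion (by exact ⟨hx, by omega⟩) (mem_minOpenNhd_self _ x)⟩
    obtain ⟨w, hwS, hwU, hwV⟩ := hconn U V hUopen hVopen hSUV hne1 hne2
    simp only [hU, hV, mem_iUnion, exists_prop] at hwU hwV
    obtain ⟨z₁, ⟨hz₁S, hz₁⟩, hwz₁⟩ := hwU
    obtain ⟨z₂, ⟨hz₂S, hz₂⟩, hwz₂⟩ := hwV
    have e1 : cheb p w ≤ cheb p z₁ + 1 :=
      le_trans (cheb_triangle p z₁ w) (by have := cheb_minOpenNhd hwz₁; omega)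
    have e2 : cheb p z₂ ≤ cheb p w + 1 := by
      have h3 := cheb_triangle p w z₂
      have h4 : cheb w z₂ ≤ 1 := by
        have := cheb_minOpenNhd hwz₂; unfold cheb at *; omega
      omega
    have : cheb p w = k := by omega
    exact hno w hwS this
  have hsub : Set.Icc 0 (cheb p x) ⊆ (fun z => cheb p z) '' S := by
    intro k hk
    obtain ⟨z, hz, hcz⟩ := key k (Set.mem_Icc.1 hk).2
    exact ⟨z, hz, hcz⟩
  calc cheb p x + 1 = (Set.Icc 0 (cheb p x)).ncard := by
        rw [← Nat.card_coe_set_eq, Nat.card_eq_fintype_card]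
        simp [Nat.card_Icc]
    _ ≤ ((fun z => cheb p z) '' S).ncard := Set.ncard_le_ncard hsub (hfin.image _)
    _ ≤ S.ncard := Set.ncard_image_le hfin

/-! ### Khalimsky intervals are COTS -/

lemma minOpenNhd_sub (s : Set ℤ) (z : s) :
    minOpenNhd (khal.induced (Subtype.val : s → ℤ)) z = Subtype.val ⁻¹' Nz z.val := by
  rw [minOpenNhd_induced khal Subtype.val z (by rw [minOpenNhd_khal]; exact isOpen_Nz _),
    minOpenNhd_khal]

lemma adj_val_close {s : Set ℤ} {w z : s}
    (h : Adjacent (khal.induced (Subtype.val : s → ℤ)) w z) :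
    (z.val - w.val).natAbs ≤ 1 := by
  rcases h.2 with hs | hs
  · have h1 := hs (mem_minOpenNhd_self _ w)
    rw [minOpenNhd_sub] at h1
    have := Nz_abs_le h1
    omega
  · have h1 := hs (mem_minOpenNhd_self _ z)
    rw [minOpenNhd_sub] at h1
    have := Nz_abs_le h1
    omega

lemma middle_sep {a b : ℤ} (x y z : ↥(Set.Icc a b))
    (hxy : x.val < y.val) (hyz : y.val < z.val) :
    @connectedComponentIn _ (khal.induced (Subtype.val : ↥(Set.Icc a b) → ℤ))
        {y}ᶜ x ≠
      @connectedComponentIn _ (khal.induced (Subtype.val : ↥(Set.Icc a b) → ℤ))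
        {y}ᶜ z := by
  letI : TopologicalSpace ℤ := khal
  intro h
  have hxne : x ∈ ({y}ᶜ : Set _) := by
    simp only [mem_compl_iff, mem_singleton_iff]
    intro e; rw [e] at hxy; omega
  have hzne : z ∈ ({y}ᶜ : Set _) := by
    simp only [mem_compl_iff, mem_singleton_iff]
    intro e; rw [e] at hyz; omega
  set T := connectedComponentIn ({y}ᶜ : Set _) x with hT
  have hxT : x ∈ T := mem_connectedComponentIn hxne
  have e : connectedComponentIn ({y}ᶜ : Set _) x = connectedComponentIn ({y}ᶜ : Set _) z := by
    rw [← hT]; exact h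
  have hzT : z ∈ T := by
    rw [hT, e]; exact mem_connectedComponentIn hzne
  have hTpre : IsPreconnected T := isPreconnected_connectedComponentIn
  have hTy : T ⊆ {y}ᶜ := connectedComponentIn_subset _ _
  set U : Set ↥(Set.Icc a b) :=
    Subtype.val ⁻¹' (⋃ m ∈ Set.Iio y.val, Nz m) with hU
  set V : Set ↥(Set.Icc a b) :=
    Subtype.val ⁻¹' (⋃ m ∈ Set.Ioi y.val, Nz m) with hV
  have hUopen : IsOpen U :=
    (isOpen_biUnion fun m _ => isOpen_Nz m).preimage continuous_subtype_val
  have hVopen : IsOpen V :=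
    (isOpen_biUnion fun m _ => isOpen_Nz m).preimage continuous_subtype_val
  have hmemU : ∀ t : ↥(Set.Icc a b), t.val < y.val → t ∈ U := by
    intro t ht
    exact mem_preimage.2 (mem_biUnion ht (self_mem_Nz _))
  have hmemV : ∀ t : ↥(Set.Icc a b), y.val < t.val → t ∈ V := by
    intro t ht
    exact mem_preimage.2 (mem_biUnion ht (self_mem_Nz _))
  have hUlt : ∀ t : ↥(Set.Icc a b), t ∈ U → t ≠ y → t.val < y.val := by
    intro t ht hne
    simp only [hU, mem_preimage, mem_iUnion, exists_prop, Set.mem_Iio] at ht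
    obtain ⟨m, hm, htm⟩ := ht
    have h1 := Nz_abs_le htm
    have h2 : t.val ≠ y.val := fun e => hne (Subtype.ext e)
    omega
  have hVgt : ∀ t : ↥(Set.Icc a b), t ∈ V → t ≠ y → y.val < t.val := by
    intro t ht hne
    simp only [hV, mem_preimage, mem_iUnion, exists_prop, Set.mem_Ioi] at ht
    obtain ⟨m, hm, htm⟩ := ht
    have h1 := Nz_abs_le htm
    have h2 : t.val ≠ y.val := fun e => hne (Subtype.ext e)
    omega
  have hTsub : T ⊆ U ∪ V := by
    intro t htT
    have hne : t ≠ y := by simpa using hTy htT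
    have : t.val ≠ y.val := fun e => hne (Subtype.ext e)
    rcases lt_or_gt_of_ne this with h' | h'
    · exact Or.inl (hmemU t h')
    · exact Or.inr (hmemV t h')
  obtain ⟨w, hwT, hwU, hwV⟩ := hTpre U V hUopen hVopen hTsub
    ⟨x, hxT, hmemU x hxy⟩ ⟨z, hzT, hmemV z hyz⟩
  have hne : w ≠ y := by simpa using hTy hwT
  have := hUlt w hwU hne
  have := hVgt w hwV hne
  omega

lemma interval_isCOTS (a b : ℤ) (hab : a ≤ b) :
    IsCOTS (khal.induced (Subtype.val : ↥(Set.Icc a b) → ℤ)) := by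
  letI : TopologicalSpace ℤ := khal
  constructor
  · exact Subtype.connectedSpace ⟨⟨a, by simp [hab]⟩, khal_Icc_preconnected a b⟩
  · intro Y hY
    obtain ⟨u, v, w, huv, huw, hvw, rfl⟩ := Set.ncard_eq_three.1 hY
    have huv' : u.val ≠ v.val := fun e => huv (Subtype.ext e)
    have huw' : u.val ≠ w.val := fun e => huw (Subtype.ext e)
    have hvw' : v.val ≠ w.val := fun e => hvw (Subtype.ext e)
    obtain ⟨x, y, z, hset, h1, h2⟩ : ∃ x y z : ↥(Set.Icc a b),
        ({u, v, w} : Set _) = {x, y, z} ∧ x.val < y.val ∧ y.val < z.val := by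
      rcases lt_trichotomy u.val v.val with h | h | h
      · rcases lt_trichotomy v.val w.val with h' | h' | h'
        · exact ⟨u, v, w, rfl, h, h'⟩
        · omega
        · rcases lt_trichotomy u.val w.val with h'' | h'' | h''
          · exact ⟨u, w, v, by ext t; simp; tauto, h'', h'⟩
          · omega
          · exact ⟨w, u, v, by ext t; simp; tauto, h'', h⟩
      · omega
      · rcases lt_trichotomy u.val w.val with h' | h' | h'
        · exact ⟨v, u, w, by ext t; simp; tauto, h, h'⟩
        · omega
        · rcases lt_trichotomy v.val w.val with h'' | h'' | h''
          · exact ⟨v, w, u, by ext t; simp; tauto, h'', h'⟩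
          · omega
          · exact ⟨w, v, u, by ext t; simp; tauto, h'', h⟩
    rw [hset]
    refine ⟨y, by simp, x, ⟨by simp, by simp; intro e; rw [e] at h1; omega⟩,
      z, ⟨by simp, by simp; intro e; rw [e] at h2; omega⟩, middle_sep x y z h1 h2⟩

lemma interval_endpoint_left (a b : ℤ) (hab : a ≤ b) :
    IsEndpoint (khal.induced (Subtype.val : ↥(Set.Icc a b) → ℤ))
      ⟨a, by simp [hab]⟩ := by
  haveI : Finite ↥(Set.Icc a b) := (Set.finite_Icc a b).to_subtype
  unfold IsEndpoint
  by_cases hb : a + 1 ≤ b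
  · have hsub : adjSet (khal.induced Subtype.val) (⟨a, by simp [hab]⟩ : ↥(Set.Icc a b))
        ⊆ {⟨a + 1, by simp; omega⟩} := by
      intro z hz
      have h1 : (z.val - a).natAbs ≤ 1 := by simpa using adj_val_close hz
      have h2 : z.val ∈ Set.Icc a b := z.2
      have h3 : z ≠ ⟨a, by simp [hab]⟩ := Ne.symm hz.1
      have h4 : z.val ≠ a := fun e => h3 (Subtype.ext e)
      simp only [Set.mem_Icc] at h2
      simp only [mem_singleton_iff]
      apply Subtype.ext
      simp only
      omega
    calc _ ≤ ({⟨a + 1, by simp; omega⟩} : Set _).ncard :=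
          Set.ncard_le_ncard hsub (Set.toFinite _)
      _ = 1 := Set.ncard_singleton _
  · have hsub : adjSet (khal.induced Subtype.val) (⟨a, by simp [hab]⟩ : ↥(Set.Icc a b))
        ⊆ (∅ : Set _) := by
      intro z hz
      have h1 : (z.val - a).natAbs ≤ 1 := by simpa using adj_val_close hz
      have h2 : z.val ∈ Set.Icc a b := z.2
      have h3 : z ≠ ⟨a, by simp [hab]⟩ := Ne.symm hz.1
      have h4 : z.val ≠ a := fun e => h3 (Subtype.ext e)
      simp only [Set.mem_Icc] at h2
      exfalso; omega
    calc _ ≤ (∅ : Set _).ncard := Set.ncard_le_ncard hsub (Set.toFinite _)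
      _ ≤ 1 := by simp

lemma interval_endpoint_right (a b : ℤ) (hab : a ≤ b) :
    IsEndpoint (khal.induced (Subtype.val : ↥(Set.Icc a b) → ℤ))
      ⟨b, by simp [hab]⟩ := by
  haveI : Finite ↥(Set.Icc a b) := (Set.finite_Icc a b).to_subtype
  unfold IsEndpoint
  by_cases hb : a ≤ b - 1
  · have hsub : adjSet (khal.induced Subtype.val) (⟨b, by simp [hab]⟩ : ↥(Set.Icc a b))
        ⊆ {⟨b - 1, by simp; omega⟩} := by
      intro z hz
      have h1 : (z.val - b).natAbs ≤ 1 := by simpa using adj_val_close hz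
      have h2 : z.val ∈ Set.Icc a b := z.2
      have h3 : z ≠ ⟨b, by simp [hab]⟩ := Ne.symm hz.1
      have h4 : z.val ≠ b := fun e => h3 (Subtype.ext e)
      simp only [Set.mem_Icc] at h2
      simp only [mem_singleton_iff]
      apply Subtype.ext
      simp only
      omega
    calc _ ≤ ({⟨b - 1, by simp; omega⟩} : Set _).ncard :=
          Set.ncard_le_ncard hsub (Set.toFinite _)
      _ = 1 := Set.ncard_singleton _
  · have hsub : adjSet (khal.induced Subtype.val) (⟨b, by simp [hab]⟩ : ↥(Set.Icc a b))
        ⊆ (∅ : Set _) := by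
      intro z hz
      have h1 : (z.val - b).natAbs ≤ 1 := by simpa using adj_val_close hz
      have h2 : z.val ∈ Set.Icc a b := z.2
      have h3 : z ≠ ⟨b, by simp [hab]⟩ := Ne.symm hz.1
      have h4 : z.val ≠ b := fun e => h3 (Subtype.ext e)
      simp only [Set.mem_Icc] at h2
      exfalso; omega
    calc _ ≤ (∅ : Set _).ncard := Set.ncard_le_ncard hsub (Set.toFinite _)
      _ ≤ 1 := by simp

/-! ### the staircase -/

def gstep (d k : ℤ) : ℤ := if d < 0 then -(min k (-d)) else min k d

lemma gstep_zero (d : ℤ) : gstep d 0 = 0 := by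
  simp only [gstep, min_def]; split_ifs <;> omega

lemma gstep_last (d M : ℤ) (h1 : d ≤ M) (h2 : -d ≤ M) : gstep d M = d := by
  simp only [gstep, min_def]; split_ifs <;> omega

lemma gstep_lip (d j k : ℤ) : (gstep d j - gstep d k).natAbs ≤ (j - k).natAbs := by
  simp only [gstep, min_def]; split_ifs <;> omega

lemma gstep_exact (d j k M : ℤ) (hM : M ≤ d ∨ M ≤ -d) (hj : j ≤ M) (hk : k ≤ M) :
    (gstep d j - gstep d k).natAbs = (j - k).natAbs := by
  simp only [gstep, min_def]; split_ifs <;> omega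

lemma gstep_parity (d k : ℤ) (h0 : 0 ≤ k) (h : k ≤ d ∨ k ≤ -d) : gstep d k % 2 = k % 2 := by
  simp only [gstep, min_def]; split_ifs <;> omega

lemma gstep_move (d j k : ℤ) (h0j : 0 ≤ j) (h0k : 0 ≤ k) (hjk : (j - k).natAbs ≤ 1)
    (hne : gstep d j ≠ gstep d k) : k ≤ d ∨ k ≤ -d := by
  simp only [gstep, min_def] at hne; split_ifs at hne <;> omega

/-! ### the upper bound: an explicit COTS-arc -/

lemma upper_bound (p x : ℤ × ℤ) (hp : (p.1 + p.2) % 2 = 0) (hx : (x.1 + x.2) % 2 = 0) :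
    ∃ A : Set (ℤ × ℤ), IsCOTSArcFromTo khalPlane A p x ∧ A.ncard = cheb p x + 1 := by
  set dx : ℤ := x.1 - p.1 with hdx
  set dy : ℤ := x.2 - p.2 with hdy
  set M : ℤ := (cheb p x : ℤ) with hMdef
  have key : (M = dx.natAbs ∧ (dy.natAbs : ℤ) ≤ dx.natAbs) ∨
      (M = dy.natAbs ∧ (dx.natAbs : ℤ) ≤ dy.natAbs) := by
    have e1 : (p.1 - x.1).natAbs = dx.natAbs := by omega
    have e2 : (p.2 - x.2).natAbs = dy.natAbs := by omega
    rw [hMdef]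
    unfold cheb
    rw [e1, e2]
    rcases le_total (dy.natAbs) (dx.natAbs) with h | h
    · left; constructor
      · rw [max_eq_left h]
      · exact_mod_cast h
    · right; constructor
      · rw [max_eq_right h]
      · exact_mod_cast h
  have hM0 : 0 ≤ M := by rcases key with ⟨h, -⟩ | ⟨h, -⟩ <;> omega
  have hdxM : dx ≤ M ∧ -dx ≤ M := by rcases key with ⟨h, h'⟩ | ⟨h, h'⟩ <;> omega
  have hdyM : dy ≤ M ∧ -dy ≤ M := by rcases key with ⟨h, h'⟩ | ⟨h, h'⟩ <;> omega
  have hpure : p.1 % 2 = p.2 % 2 := by omega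
  have hab : p.1 ≤ p.1 + M := by omega
  set C : Type := ↥(Set.Icc p.1 (p.1 + M)) with hC
  set tC : TopologicalSpace C := khal.induced Subtype.val with htC
  haveI : Finite C := (Set.finite_Icc _ _).to_subtype
  set f : C → ℤ × ℤ :=
    fun z => (p.1 + gstep dx (z.val - p.1), p.2 + gstep dy (z.val - p.1)) with hf
  -- the key neighborhood equivalence
  have hg : ∀ w z : C, w.val ∈ Nz z.val ↔
      ((f w).1 ∈ Nz (f z).1 ∧ (f w).2 ∈ Nz (f z).2) := by
    intro w z
    obtain ⟨hw1, hw2⟩ := Set.mem_Icc.1 w.2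
    obtain ⟨hz1, hz2⟩ := Set.mem_Icc.1 z.2
    simp only [hf, mem_Nz, Int.even_iff]
    set j : ℤ := (w : ℤ) - p.1 with hj
    set k : ℤ := (z : ℤ) - p.1 with hk
    have hj0 : 0 ≤ j := by omega
    have hjM : j ≤ M := by omega
    have hk0 : 0 ≤ k := by omega
    have hkM : k ≤ M := by omega
    constructor
    · rintro (heq | ⟨hev, hle⟩)
      · have : j = k := by omega
        rw [this]
        exact ⟨Or.inl rfl, Or.inl rfl⟩
      · have hjk : (j - k).natAbs ≤ 1 := by omega
        have hevk : (p.1 + k) % 2 = 0 := by omega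
        constructor
        · by_cases hgi : gstep dx j = gstep dx k
          · left; rw [hgi]
          · right
            have hmov := gstep_move dx j k hj0 hk0 hjk hgi
            have hpar := gstep_parity dx k hk0 hmov
            have hlip := gstep_lip dx j k
            constructor
            · omega
            · omega
        · by_cases hgi : gstep dy j = gstep dy k
          · left; rw [hgi]
          · right
            have hmov := gstep_move dy j k hj0 hk0 hjk hgi
            have hpar := gstep_parity dy k hk0 hmov
            have hlip := gstep_lip dy j k
            constructor
            · omega
            · omega
    · rintro ⟨h1, h2⟩
      rcases key with ⟨hMeq, -⟩ | ⟨hMeq, -⟩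
      · have hdom : M ≤ dx ∨ M ≤ -dx := by omega
        have hex := gstep_exact dx j k M hdom hjM hkM
        rcases h1 with heq | ⟨hev, hle⟩
        · left
          have : gstep dx j - gstep dx k = 0 := by omega
          rw [this] at hex
          omega
        · right
          have hpar := gstep_parity dx k hk0 (by omega)
          constructor
          · omega
          · omega
      · have hdom : M ≤ dy ∨ M ≤ -dy := by omega
        have hex := gstep_exact dy j k M hdom hjM hkM
        rcases h2 with heq | ⟨hev, hle⟩
        · left
          have : gstep dy j - gstep dy k = 0 := by omega
          rw [this] at hex
          omega
        · right
          have hpar := gstep_parity dy k hk0 (by omega)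
          constructor
          · omega
          · omega
  -- injectivity
  have hinj : Function.Injective f := by
    intro w z hwz
    obtain ⟨hw1, hw2⟩ := Set.mem_Icc.1 w.2
    obtain ⟨hz1, hz2⟩ := Set.mem_Icc.1 z.2
    apply Subtype.ext
    have e1 : gstep dx (w.val - p.1) = gstep dx (z.val - p.1) := by
      have := congrArg Prod.fst hwz
      simp only [hf] at this
      omega
    have e2 : gstep dy (w.val - p.1) = gstep dy (z.val - p.1) := by
      have := congrArg Prod.snd hwz
      simp only [hf] at this
      omega
    rcases key with ⟨hMeq, -⟩ | ⟨hMeq, -⟩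
    · have hex := gstep_exact dx (w.val - p.1) (z.val - p.1) M (by omega)
        (by omega) (by omega)
      omega
    · have hex := gstep_exact dy (w.val - p.1) (z.val - p.1) M (by omega)
        (by omega) (by omega)
      omega
  -- embedding
  have hind : tC = khalPlane.induced f := by
    apply topology_eq_of_minOpenNhd
    intro z
    rw [htC, minOpenNhd_sub,
      minOpenNhd_induced khalPlane f z (by rw [minOpenNhd_khalPlane]; exact isOpen_Nz2 _),
      minOpenNhd_khalPlane]
    ext w
    simp only [mem_preimage, Set.mem_prod]
    exact hg w z
  have hemb : @Topology.IsEmbedding C (ℤ × ℤ) tC khalPlane f :=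
    @Topology.IsEmbedding.mk C (ℤ × ℤ) tC khalPlane f
      (@Topology.IsInducing.mk C (ℤ × ℤ) tC khalPlane f hind) hinj
  refine ⟨Set.range f, ⟨C, tC, ‹Finite C›, interval_isCOTS p.1 (p.1 + M) hab, f, hemb, rfl,
    ⟨p.1, by simp [hab]⟩, ⟨p.1 + M, by simp; omega⟩,
    interval_endpoint_left p.1 (p.1 + M) hab, interval_endpoint_right p.1 (p.1 + M) hab,
    ?_, ?_⟩, ?_⟩
  · have e0x := gstep_zero dx
    have e0y := gstep_zero dy
    simp only [hf]
    apply Prod.ext <;> simp <;> omega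
  · have eMx := gstep_last dx M hdxM.1 hdxM.2
    have eMy := gstep_last dy M hdyM.1 hdyM.2
    simp only [hf]
    apply Prod.ext <;> simp <;> omega
  · -- cardinality
    show (Set.range f).ncard = cheb p x + 1
    have h1 : (Set.range f).ncard = Nat.card C := by
      rw [← Nat.card_coe_set_eq, Nat.card_range_of_injective hinj]
    rw [h1, hC]
    rw [Nat.card_coe_set_eq, ← Finset.coe_Icc, Set.ncard_coe_finset, Int.card_Icc]
    omega

/-! ### distance formula and the final theorem -/

lemma cotsDist_eq (p x : ℤ × ℤ) (hp : (p.1 + p.2) % 2 = 0) (hx : (x.1 + x.2) % 2 = 0) :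
    cotsDist khalPlane p x = (cheb p x : ℕ∞) := by
  apply le_antisymm
  · apply sInf_le
    obtain ⟨A, hA, hcard⟩ := upper_bound p x hp hx
    refine ⟨A, hA, ?_⟩
    rw [hcard]
    push_cast
    ring
  · apply le_sInf
    rintro n ⟨A, hA, hcard⟩
    obtain ⟨C, tC, hfinC, hcots, f, hemb, hrange, c₀, c₁, -, -, hc₀, hc₁⟩ := hA
    haveI := hfinC
    have hfin : A.Finite := hrange ▸ Set.finite_range f
    have hpre : @IsPreconnected _ khalPlane A := by
      rw [← hrange]
      letI := tC
      letI : TopologicalSpace (ℤ × ℤ) := khalPlane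
      haveI : @PreconnectedSpace C tC := @ConnectedSpace.toPreconnectedSpace C tC hcots.1
      have hcont : @Continuous C (ℤ × ℤ) tC khalPlane f := hemb.toIsInducing.continuous
      exact isPreconnected_range hcont
    have hpA : p ∈ A := hrange ▸ ⟨c₀, hc₀⟩
    have hxA : x ∈ A := hrange ▸ ⟨c₁, hc₁⟩
    have hlow : cheb p x + 1 ≤ A.ncard := lower_bound hfin hpre hpA hxA
    cases n with
    | top => exact le_top
    | coe m =>
      have : (A.ncard : ℕ∞) = ((m + 1 : ℕ) : ℕ∞) := by rw [hcard]; push_cast; ring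
      have hAm : A.ncard = m + 1 := by exact_mod_cast this
      have : cheb p x ≤ m := by omega
      exact_mod_cast this

lemma purity_mod {u : ℤ × ℤ} (h : IsPurePt u) : (u.1 + u.2) % 2 = 0 := by
  rcases h with ⟨h1, h2⟩ | ⟨h1, h2⟩
  · rw [Int.even_iff] at h1 h2; omega
  · rw [Int.odd_iff] at h1 h2; omega

lemma cheb_parity (p u : ℤ × ℤ) (hp : (p.1 + p.2) % 2 = 0) (hu : (u.1 + u.2) % 2 = 0) :
    cheb p u % 2 = (p.1 - u.1).natAbs % 2 := by
  unfold cheb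
  rcases le_total ((p.1 - u.1).natAbs) ((p.2 - u.2).natAbs) with h | h
  · rw [max_eq_right h]; omega
  · rw [max_eq_left h]


/-- From a pure point of the Khalimsky plane, an open pure point and a closed pure
point are never at the same COTS-distance. -/
theorem stmt11 (p q r : ℤ × ℤ) (hp : IsPurePt p)
    (hq : Odd q.1 ∧ Odd q.2) (hr : Even r.1 ∧ Even r.2) :
    cotsDist khalPlane p q ≠ cotsDist khalPlane p r := by
  have hp' := purity_mod hp
  have hq1 : q.1 % 2 = 1 := Int.odd_iff.1 hq.1
  have hq2 : q.2 % 2 = 1 := Int.odd_iff.1 hq.2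
  have hr1 : r.1 % 2 = 0 := Int.even_iff.1 hr.1
  have hr2 : r.2 % 2 = 0 := Int.even_iff.1 hr.2
  have hq' : (q.1 + q.2) % 2 = 0 := by omega
  have hr' : (r.1 + r.2) % 2 = 0 := by omega
  rw [cotsDist_eq p q hp' hq', cotsDist_eq p r hp' hr']
  intro heq
  have heq' : cheb p q = cheb p r := by exact_mod_cast heq
  have h1 := cheb_parity p q hp' hq'
  have h2 := cheb_parity p r hp' hr'
  omega
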